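/- In C(𝕋), identify C*(ℤ) via the Fourier transform sending δ₁ to the identity function z ↦ z. The Fourier coefficients of the function m(z) = (z − 2z²)/|z − 2z²| are nonzero at both index 1 and index 2; equivalently, ∫_𝕋 m(z) z̄ dz ≠ 0 and ∫_𝕋 m(z) z̄² dz ≠ 0 (with normalized Haar measure). -/

import Mathlib

open intervalIntegral Real

/-- The unimodular function `m(z) = (z - 2z²)/|z - 2z²|`, viewed as a function on `ℂ`. -/
noncomputable def mFun (z : ℂ) : ℂ :=
  (z - 2 * z ^ 2) / (‖z - 2 * z ^ 2‖ : ℂ)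

private lemma five_sub_pos (θ : ℝ) : (0:ℝ) < 5 - 4 * Real.cos θ := by
  nlinarith [Real.neg_one_le_cos θ, Real.cos_le_one θ]

private lemma sqrt_aux_pos (θ : ℝ) : 0 < Real.sqrt (5 - 4 * Real.cos θ) :=
  Real.sqrt_pos.mpr (five_sub_pos θ)

private lemma abs_aux (θ : ℝ) :
    ‖Complex.exp (θ * Complex.I) - 2 * Complex.exp (θ * Complex.I) ^ 2‖
      = Real.sqrt (5 - 4 * Real.cos θ) := by
  have h1 : Complex.exp (θ * Complex.I) - 2 * Complex.exp (θ * Complex.I)^2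
      = Complex.exp (θ * Complex.I) * (1 - 2 * Complex.exp (θ * Complex.I)) := by ring
  rw [h1, norm_mul, Complex.norm_exp_ofReal_mul_I, one_mul, Complex.norm_def,
    Complex.normSq_apply]
  congr 1
  simp only [Complex.sub_re, Complex.sub_im, Complex.one_re, Complex.one_im,
    Complex.mul_re, Complex.mul_im, Complex.re_ofNat, Complex.im_ofNat,
    Complex.exp_ofReal_mul_I_re, Complex.exp_ofReal_mul_I_im]
  nlinarith [Real.sin_sq_add_cos_sq θ]

private lemma F1_eq (θ : ℝ) :
    mFun (Complex.exp (θ * Complex.I)) * Complex.exp (-(θ * Complex.I))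
      = (1 - 2 * Complex.exp (θ * Complex.I)) / (Real.sqrt (5 - 4 * Real.cos θ) : ℂ) := by
  rw [mFun, abs_aux, div_mul_eq_mul_div]
  congr 1
  have h : Complex.exp (θ * Complex.I) * Complex.exp (-(θ * Complex.I)) = 1 := by
    rw [← Complex.exp_add]; simp
  calc (Complex.exp (θ * Complex.I) - 2 * Complex.exp (θ * Complex.I) ^ 2)
        * Complex.exp (-(θ * Complex.I))
      = (Complex.exp (θ * Complex.I) * Complex.exp (-(θ * Complex.I)))
          * (1 - 2 * Complex.exp (θ * Complex.I)) := by ring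
    _ = 1 - 2 * Complex.exp (θ * Complex.I) := by rw [h, one_mul]

private lemma F2_eq (θ : ℝ) :
    mFun (Complex.exp (θ * Complex.I)) * Complex.exp (-(2 * θ * Complex.I))
      = (Complex.exp (-(θ * Complex.I)) - 2) / (Real.sqrt (5 - 4 * Real.cos θ) : ℂ) := by
  rw [mFun, abs_aux, div_mul_eq_mul_div]
  congr 1
  have h1 : Complex.exp (θ * Complex.I) * Complex.exp (-(2 * θ * Complex.I))
      = Complex.exp (-(θ * Complex.I)) := by
    rw [← Complex.exp_add]; ring_nf
  have h2 : Complex.exp (θ * Complex.I) ^ 2 * Complex.exp (-(2 * θ * Complex.I)) = 1 := by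
    rw [sq, ← Complex.exp_add, ← Complex.exp_add]
    have : (θ:ℂ) * Complex.I + θ * Complex.I + -(2 * θ * Complex.I) = 0 := by ring
    rw [this, Complex.exp_zero]
  calc (Complex.exp (θ * Complex.I) - 2 * Complex.exp (θ * Complex.I) ^ 2)
        * Complex.exp (-(2 * θ * Complex.I))
      = Complex.exp (θ * Complex.I) * Complex.exp (-(2 * θ * Complex.I))
        - 2 * (Complex.exp (θ * Complex.I) ^ 2 * Complex.exp (-(2 * θ * Complex.I))) := by ring
    _ = Complex.exp (-(θ * Complex.I)) - 2 := by rw [h1, h2, mul_one]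

private lemma re1 (θ : ℝ) :
    ((1 - 2 * Complex.exp (θ * Complex.I)) / (Real.sqrt (5 - 4 * Real.cos θ) : ℂ)).re
      = (1 - 2 * Real.cos θ) / Real.sqrt (5 - 4 * Real.cos θ) := by
  rw [Complex.div_ofReal_re]
  congr 1
  simp [Complex.exp_ofReal_mul_I_re]

private lemma re2 (θ : ℝ) :
    ((Complex.exp (-(θ * Complex.I)) - 2) / (Real.sqrt (5 - 4 * Real.cos θ) : ℂ)).re
      = (Real.cos θ - 2) / Real.sqrt (5 - 4 * Real.cos θ) := by
  have h : -((θ:ℂ) * Complex.I) = ((-θ : ℝ) : ℂ) * Complex.I := by push_cast; ring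
  rw [Complex.div_ofReal_re, Complex.sub_re, h, Complex.exp_ofReal_mul_I_re, Real.cos_neg]
  norm_num

private lemma key_ineq (c : ℝ) (h1 : -1 < c) (h2 : c < 1) :
    0 < 1 - 2*c + c * Real.sqrt (5 - 4*c) := by
  have hpos : (0:ℝ) < 5 - 4*c := by linarith
  set s := Real.sqrt (5 - 4*c) with hs
  have hsq : s^2 = 5 - 4*c := Real.sq_sqrt hpos.le
  have hs0 : 0 < s := Real.sqrt_pos.mpr hpos
  have hs1 : 1 < s := by nlinarith
  have hs3 : s < 3 := by nlinarith
  nlinarith [sq_nonneg (s-1), sq_nonneg (s-3), sq_nonneg (c*s), mul_pos hs0 hs0]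

private lemma h_pos {θ : ℝ} (h1 : -1 < Real.cos θ) (h2 : Real.cos θ < 1) :
    0 < (1 - 2 * Real.cos θ) / Real.sqrt (5 - 4 * Real.cos θ) + Real.cos θ := by
  set c := Real.cos θ
  set s := Real.sqrt (5 - 4*c) with hs
  have hs0 : 0 < s := sqrt_aux_pos θ
  have key := key_ineq c h1 h2
  have : (1 - 2*c) / s + c = (1 - 2*c + c*s) / s := by field_simp
  rw [this]
  exact div_pos key hs0

private lemma contF1 : Continuous (fun θ : ℝ =>
    (1 - 2 * Complex.exp (θ * Complex.I)) / (Real.sqrt (5 - 4 * Real.cos θ) : ℂ)) := by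
  apply Continuous.div
  · fun_prop
  · fun_prop
  · intro θ
    exact_mod_cast (sqrt_aux_pos θ).ne'

private lemma contF2 : Continuous (fun θ : ℝ =>
    (Complex.exp (-(θ * Complex.I)) - 2) / (Real.sqrt (5 - 4 * Real.cos θ) : ℂ)) := by
  apply Continuous.div
  · fun_prop
  · fun_prop
  · intro θ
    exact_mod_cast (sqrt_aux_pos θ).ne'

private lemma contg1 : Continuous (fun θ : ℝ =>
    (1 - 2 * Real.cos θ) / Real.sqrt (5 - 4 * Real.cos θ) + Real.cos θ) := by
  apply Continuous.add _ Real.continuous_cos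
  apply Continuous.div
  · fun_prop
  · fun_prop
  · exact fun θ => (sqrt_aux_pos θ).ne'

/-- positivity of the integral for the first coefficient -/
private lemma int1_pos :
    0 < ∫ θ in (0:ℝ)..(2*π), (1 - 2 * Real.cos θ) / Real.sqrt (5 - 4 * Real.cos θ) := by
  have hsplit : (∫ θ in (0:ℝ)..(2*π), (1 - 2 * Real.cos θ) / Real.sqrt (5 - 4 * Real.cos θ))
      = (∫ θ in (0:ℝ)..(2*π),
          ((1 - 2 * Real.cos θ) / Real.sqrt (5 - 4 * Real.cos θ) + Real.cos θ))
        - ∫ θ in (0:ℝ)..(2*π), Real.cos θ := by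
    rw [← intervalIntegral.integral_sub (contg1.intervalIntegrable _ _)
      (Real.continuous_cos.intervalIntegrable _ _)]
    simp
  rw [hsplit, integral_cos]
  simp only [Real.sin_two_pi, Real.sin_zero, sub_zero]
  have hadd : (∫ θ in (0:ℝ)..(2*π),
      ((1 - 2 * Real.cos θ) / Real.sqrt (5 - 4 * Real.cos θ) + Real.cos θ))
      = (∫ θ in (0:ℝ)..π, ((1 - 2 * Real.cos θ) / Real.sqrt (5 - 4 * Real.cos θ) + Real.cos θ))
      + ∫ θ in π..(2*π), ((1 - 2 * Real.cos θ) / Real.sqrt (5 - 4 * Real.cos θ) + Real.cos θ) := by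
    rw [intervalIntegral.integral_add_adjacent_intervals
      (contg1.intervalIntegrable _ _) (contg1.intervalIntegrable _ _)]
  rw [hadd]
  have hpi : (0:ℝ) < π := Real.pi_pos
  have h1 : 0 < ∫ θ in (0:ℝ)..π,
      ((1 - 2 * Real.cos θ) / Real.sqrt (5 - 4 * Real.cos θ) + Real.cos θ) := by
    apply intervalIntegral_pos_of_pos_on (contg1.intervalIntegrable _ _) _ hpi
    intro θ hθ
    apply h_pos
    · have := Real.strictAntiOn_cos ⟨hθ.1.le, hθ.2.le⟩ ⟨Real.pi_pos.le, le_refl π⟩ hθ.2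
      · simpa [Real.cos_pi] using this
    · have := Real.strictAntiOn_cos ⟨le_refl (0:ℝ), Real.pi_pos.le⟩ ⟨hθ.1.le, hθ.2.le⟩ hθ.1
      simpa [Real.cos_zero] using this
  have h2 : 0 < ∫ θ in π..(2*π),
      ((1 - 2 * Real.cos θ) / Real.sqrt (5 - 4 * Real.cos θ) + Real.cos θ) := by
    apply intervalIntegral_pos_of_pos_on (contg1.intervalIntegrable _ _) _ (by linarith)
    intro θ hθ
    have hφ : 2*π - θ ∈ Set.Ioo (0:ℝ) π := ⟨by linarith [hθ.2], by linarith [hθ.1]⟩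
    have hc : Real.cos θ = Real.cos (2*π - θ) := (Real.cos_two_pi_sub θ).symm
    rw [hc]
    apply h_pos
    · have := Real.strictAntiOn_cos ⟨hφ.1.le, hφ.2.le⟩ ⟨Real.pi_pos.le.trans (le_refl π), le_refl π⟩ hφ.2
      simpa [Real.cos_pi] using this
    · have := Real.strictAntiOn_cos ⟨le_refl (0:ℝ), Real.pi_pos.le⟩ ⟨hφ.1.le, hφ.2.le⟩ hφ.1
      simpa [Real.cos_zero] using this
  linarith

/-- negativity of the integral for the second coefficient -/
private lemma int2_neg :
    (∫ θ in (0:ℝ)..(2*π), (Real.cos θ - 2) / Real.sqrt (5 - 4 * Real.cos θ)) < 0 := by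
  have hcont : Continuous (fun θ : ℝ => (2 - Real.cos θ) / Real.sqrt (5 - 4 * Real.cos θ)) := by
    apply Continuous.div
    · fun_prop
    · fun_prop
    · exact fun θ => (sqrt_aux_pos θ).ne'
  have hpos : 0 < ∫ θ in (0:ℝ)..(2*π), (2 - Real.cos θ) / Real.sqrt (5 - 4 * Real.cos θ) := by
    refine intervalIntegral_pos_of_pos_on (hcont.intervalIntegrable (μ := MeasureTheory.volume) 0 (2*π))
      (fun θ _ => ?_) (by linarith [Real.pi_pos])
    exact div_pos (by nlinarith [Real.cos_le_one θ]) (sqrt_aux_pos θ)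
  have : (∫ θ in (0:ℝ)..(2*π), (Real.cos θ - 2) / Real.sqrt (5 - 4 * Real.cos θ))
      = -∫ θ in (0:ℝ)..(2*π), (2 - Real.cos θ) / Real.sqrt (5 - 4 * Real.cos θ) := by
    rw [← intervalIntegral.integral_neg]
    apply intervalIntegral.integral_congr
    intro θ _
    ring
  rw [this]
  linarith

/-- The first and second Fourier coefficients of `m` (with respect to normalized Haar
measure on the circle, parametrized by `z = e^{iθ}`) are both nonzero. -/
theorem mFun_fourier_coefficients_one_two_nonzero :
    (∫ θ in (0 : ℝ)..(2 * π),
        mFun (Complex.exp (θ * Complex.I)) * Complex.exp (-(θ * Complex.I))) ≠ 0 ∧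
    (∫ θ in (0 : ℝ)..(2 * π),
        mFun (Complex.exp (θ * Complex.I)) * Complex.exp (-(2 * θ * Complex.I))) ≠ 0 := by
  constructor
  · have heq : (∫ θ in (0:ℝ)..(2*π),
        mFun (Complex.exp (θ * Complex.I)) * Complex.exp (-(θ * Complex.I)))
        = ∫ θ in (0:ℝ)..(2*π),
          (1 - 2 * Complex.exp (θ * Complex.I)) / (Real.sqrt (5 - 4 * Real.cos θ) : ℂ) :=
      intervalIntegral.integral_congr (fun θ _ => F1_eq θ)
    rw [heq]
    intro h0
    have hre := Complex.reCLM.intervalIntegral_comp_comm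
      ((contF1.intervalIntegrable (μ := MeasureTheory.volume) (0:ℝ) (2*π)))
    rw [h0] at hre
    simp only [Complex.reCLM_apply, map_zero] at hre
    have : (∫ θ in (0:ℝ)..(2*π),
        (1 - 2 * Real.cos θ) / Real.sqrt (5 - 4 * Real.cos θ)) = 0 := by
      have hcongr : (∫ θ in (0:ℝ)..(2*π),
          (1 - 2 * Real.cos θ) / Real.sqrt (5 - 4 * Real.cos θ))
          = ∫ θ in (0:ℝ)..(2*π),
            ((1 - 2 * Complex.exp (θ * Complex.I))
              / (Real.sqrt (5 - 4 * Real.cos θ) : ℂ)).re :=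
        intervalIntegral.integral_congr (fun θ _ => (re1 θ).symm)
      rw [hcongr]
      exact hre
    linarith [int1_pos, this]
  · have heq : (∫ θ in (0:ℝ)..(2*π),
        mFun (Complex.exp (θ * Complex.I)) * Complex.exp (-(2 * θ * Complex.I)))
        = ∫ θ in (0:ℝ)..(2*π),
          (Complex.exp (-(θ * Complex.I)) - 2) / (Real.sqrt (5 - 4 * Real.cos θ) : ℂ) :=
      intervalIntegral.integral_congr (fun θ _ => F2_eq θ)
    rw [heq]
    intro h0
    have hre := Complex.reCLM.intervalIntegral_comp_comm
      ((contF2.intervalIntegrable (μ := MeasureTheory.volume) (0:ℝ) (2*π)))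
    rw [h0] at hre
    simp only [Complex.reCLM_apply, map_zero] at hre
    have : (∫ θ in (0:ℝ)..(2*π),
        (Real.cos θ - 2) / Real.sqrt (5 - 4 * Real.cos θ)) = 0 := by
      have hcongr : (∫ θ in (0:ℝ)..(2*π),
          (Real.cos θ - 2) / Real.sqrt (5 - 4 * Real.cos θ))
          = ∫ θ in (0:ℝ)..(2*π),
            ((Complex.exp (-(θ * Complex.I)) - 2)
              / (Real.sqrt (5 - 4 * Real.cos θ) : ℂ)).re :=
        intervalIntegral.integral_congr (fun θ _ => (re2 θ).symm)
      rw [hcongr]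
      exact hre
    linarith [int2_neg, this]
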